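/- Let D be even, N = D+1, and let B ∈ 𝒳_D with B ≠ ∅ and B ⊆ {arcs {i,j} with i>j, i≡j mod 2} (i.e., B = B^0), satisfying properties (P1) and (P3). Then B = {{D+1,1},{D,2},...,{D+2−s,s}} for some s ≥ 1, i.e., B ∈ Pr_D. -/
import Mathlib


/-- `J` is 0-covered by `B`: `J` is a disjoint union of intervals `[a,b]` over
arcs `(a,b) ∈ B¹` (arcs with first entry smaller) forming an interleaved chain. -/
def Covered0 (B : Finset (ℕ × ℕ)) (J : Finset ℕ) : Prop :=
  ∃ (m : ℕ) (a b : ℕ → ℕ),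
    (∀ r, 1 ≤ r → r ≤ m → (a r, b r) ∈ B ∧ a r < b r) ∧
    (∀ r, 1 ≤ r → r < m → b r < a (r + 1)) ∧
    J = (Finset.Icc 1 m).biUnion fun r => Finset.Icc (a r) (b r)

/-- let `D` be even `≥ 2`, `N = D+1`, and let `B` be a nonempty
collection of pairwise disjoint two-element subsets of `[1,N]`, all of the
second kind (`i > j`, `i ≡ j mod 2`), i.e. `B = B⁰`, satisfying (P1) (witnessed
by the strictly increasing sequence `i_1 < ⋯ < i_{2s}` with
`B = {(i_{2s},i_1),…,(i_{s+1},i_s)}`) and (P3). Then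
`B = {(D+1,1),(D,2),…,(D+2−s,s)}`, i.e. `B ∈ Pr_D`. -/
theorem stmt17 (D N : ℕ) (hD : Even D) (h2 : 2 ≤ D) (hN : N = D + 1)
    (B : Finset (ℕ × ℕ)) (hne : B.Nonempty)
    (hmem : ∀ p ∈ B, 1 ≤ p.2 ∧ p.2 < p.1 ∧ p.1 ≤ N ∧ p.1 % 2 = p.2 % 2)
    (hdisj : ∀ p ∈ B, ∀ q ∈ B, p ≠ q →
      ({p.1, p.2} : Finset ℕ) ∩ {q.1, q.2} = ∅)
    -- (P1):
    (s : ℕ) (hs : 1 ≤ s) (i : ℕ → ℕ)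
    (hmono : ∀ r, 1 ≤ r → r < 2 * s → i r < i (r + 1))
    (hrange : ∀ r, 1 ≤ r → r ≤ 2 * s → 1 ≤ i r ∧ i r ≤ N)
    (hB : B = (Finset.Icc 1 s).image (fun r => (i (2 * s + 1 - r), i r)))
    -- (P3):
    (hP3arc : ∀ p ∈ B, p.1 < p.2 → Covered0 B (Finset.Icc (p.1 + 1) (p.2 - 1)))
    (hP3mid : ∀ r, ((1 ≤ r ∧ r ≤ s - 1) ∨ (s + 1 ≤ r ∧ r ≤ 2 * s - 1)) →
      Covered0 B (Finset.Icc (i r + 1) (i (r + 1) - 1)))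
    (hP3lo : Covered0 B (Finset.Icc 1 (i 1 - 1)))
    (hP3hi : Covered0 B (Finset.Icc (i (2 * s) + 1) N)) :
    B = (Finset.Icc 1 s).image (fun a => (D + 2 - a, a)) := by
  have hcov : ∀ J, Covered0 B J → J = ∅ := by
    rintro J ⟨m, a, b, h1, _, rfl⟩
    have hm : m = 0 := by
      by_contra hm
      have h1' := h1 1 le_rfl (Nat.one_le_iff_ne_zero.2 hm)
      exact absurd h1'.2 (not_lt.2 (le_of_lt (hmem _ h1'.1).2.1))
    subst hm; simp
  have hempty : ∀ x y, Covered0 B (Finset.Icc x y) → y < x := by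
    intro x y h
    have := hcov _ h
    rwa [Finset.Icc_eq_empty_iff, not_le] at this
  have hi1 : i 1 = 1 := by
    have := hempty _ _ hP3lo
    have h1 := (hrange 1 le_rfl (by omega)).1
    omega
  have hi2s : i (2 * s) = N := by
    have := hempty _ _ hP3hi
    have := (hrange (2 * s) (by omega) le_rfl).2
    omega
  have hstep : ∀ r, ((1 ≤ r ∧ r ≤ s - 1) ∨ (s + 1 ≤ r ∧ r ≤ 2 * s - 1)) →
      i (r + 1) = i r + 1 := by
    intro r hr
    have h := hempty _ _ (hP3mid r hr)
    have := hmono r (by omega) (by omega)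
    omega
  have hlow : ∀ r, 1 ≤ r → r ≤ s → i r = r := by
    intro r
    induction r with
    | zero => omega
    | succ n ih =>
      intro h1 h2
      by_cases hn : n = 0
      · subst hn; exact hi1
      · have hst := hstep n (Or.inl ⟨by omega, by omega⟩)
        have := ih (by omega) (by omega)
        omega
  have hhigh : ∀ k, k ≤ s - 1 → i (2 * s - k) = N - k := by
    intro k
    induction k with
    | zero => intro _; simpa using hi2s
    | succ n ih =>
      intro h
      have hst := hstep (2 * s - (n + 1)) (Or.inr ⟨by omega, by omega⟩)
      have h2' : 2 * s - (n + 1) + 1 = 2 * s - n := by omega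
      rw [h2'] at hst
      have := ih (by omega)
      have := (hrange (2 * s - (n + 1)) (by omega) (by omega)).1
      omega
  rw [hB]
  apply Finset.image_congr
  intro r hr
  simp only [Finset.coe_Icc, Set.mem_Icc] at hr
  have hl := hlow r hr.1 hr.2
  have hh : i (2 * s + 1 - r) = D + 2 - r := by
    have hhg := hhigh (r - 1) (by omega)
    have h' : 2 * s - (r - 1) = 2 * s + 1 - r := by omega
    rw [h'] at hhg
    omega
  simp only [hl, hh]
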